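/- arXiv:2208.00549 — 2 statements merged into one kernel-verified Lean document; each statement's English description precedes it below -/
import Mathlib

section
/- Let M be a real symmetric positive definite k×k matrix, let X₁,…,X_m be real symmetric positive semidefinite k×k matrices, and let w₁,…,w_m ≥ 0 with Σᵢ wᵢ = 1. Then Σᵢ wᵢ · log det(Xᵢ·M⁻¹ + Id) ≤ log det((Σᵢ wᵢ Xᵢ)·M⁻¹ + Id). (Jensen's inequality for the concave function X ↦ log det(X·M⁻¹ + Id) on the positive semidefinite cone.) -/
open Matrix
open scoped MatrixOrder

private lemma my_sum_mulVec {n : ℕ} {m : ℕ} (w : Fin m → ℝ)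
    (A : Fin m → Matrix (Fin n) (Fin n) ℝ) (x : Fin n → ℝ) :
    (∑ i, w i • A i) *ᵥ x = ∑ i, w i • (A i *ᵥ x) := by
  rw [show (∑ i, w i • A i) *ᵥ x
      = Matrix.mulVec.addMonoidHomLeft x (∑ i, w i • A i) from rfl, map_sum]
  exact Finset.sum_congr rfl fun i _ => Matrix.smul_mulVec (w i) (A i) x

private lemma my_dot_sum {n : ℕ} {m : ℕ} (u : Fin n → ℝ) (v : Fin m → Fin n → ℝ) :
    u ⬝ᵥ (∑ i, v i) = ∑ i, u ⬝ᵥ v i := by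
  simp only [dotProduct, Finset.sum_apply, Finset.mul_sum]
  exact Finset.sum_comm

private lemma my_herm_sum {n : ℕ} {m : ℕ} {w : Fin m → ℝ}
    {A : Fin m → Matrix (Fin n) (Fin n) ℝ} (hA : ∀ i, (A i).IsHermitian) :
    (∑ i, w i • A i).IsHermitian := by
  show (∑ i, w i • A i)ᴴ = ∑ i, w i • A i
  rw [conjTranspose_sum]
  congr 1; funext i
  rw [conjTranspose_smul, (hA i).eq]
  simp

/-- `log det B ≤ trace B - n` for a positive definite `n × n` matrix `B`. -/
private lemma log_det_le_trace_sub {n : ℕ} {B : Matrix (Fin n) (Fin n) ℝ} (hB : B.PosDef) :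
    Real.log B.det ≤ B.trace - n := by
  have hH : B.IsHermitian := hB.1
  have hpos : ∀ i, 0 < hH.eigenvalues i := hB.eigenvalues_pos
  have hdet : B.det = ∏ i, hH.eigenvalues i := by
    simpa using hH.det_eq_prod_eigenvalues
  have htr : B.trace = ∑ i, hH.eigenvalues i := by
    conv_lhs => rw [hH.spectral_theorem]
    rw [Unitary.conjStarAlgAut_apply]
    rw [Matrix.trace_mul_cycle]
    have h1 : (star (hH.eigenvectorUnitary : Matrix (Fin n) (Fin n) ℝ)) *
        (hH.eigenvectorUnitary : Matrix (Fin n) (Fin n) ℝ) = 1 :=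
      Unitary.coe_star_mul_self hH.eigenvectorUnitary
    rw [h1, one_mul, Matrix.trace_diagonal]
    simp
  rw [hdet, htr, Real.log_prod (fun i _ => (hpos i).ne')]
  calc ∑ i, Real.log (hH.eigenvalues i) ≤ ∑ i, (hH.eigenvalues i - 1) :=
        Finset.sum_le_sum fun i _ => Real.log_le_sub_one_of_pos (hpos i)
    _ = (∑ i, hH.eigenvalues i) - n := by
        rw [Finset.sum_sub_distrib]; simp

/-- Conjugation of a positive definite matrix by an invertible Hermitian matrix. -/
private lemma conj_posDef {n : ℕ} {A R : Matrix (Fin n) (Fin n) ℝ} (hA : A.PosDef)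
    (hR : R.IsHermitian) (hdet : IsUnit R.det) : (R * A * R).PosDef := by
  refine Matrix.PosDef.of_dotProduct_mulVec_pos ?_ fun x hx => ?_
  · show (R * A * R)ᴴ = R * A * R
    rw [conjTranspose_mul, conjTranspose_mul, hR.eq, hA.1.eq, mul_assoc]
  · have hy : R *ᵥ x ≠ 0 := by
      intro h
      apply hx
      have := congrArg (fun v => R⁻¹ *ᵥ v) h
      simpa [Matrix.mulVec_mulVec, Matrix.nonsing_inv_mul R hdet] using this
    have hpos := hA.dotProduct_mulVec_pos hy
    have key : star x ⬝ᵥ ((R * A * R) *ᵥ x)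
        = star (R *ᵥ x) ⬝ᵥ (A *ᵥ (R *ᵥ x)) := by
      rw [star_mulVec, ← Matrix.dotProduct_mulVec, Matrix.mulVec_mulVec,
        Matrix.mulVec_mulVec, hR.eq]
    rw [key]; exact hpos

/-- Jensen's inequality for `log det` on positive definite matrices. -/
private lemma jensen_log_det {n m : ℕ} (A : Fin m → Matrix (Fin n) (Fin n) ℝ)
    (hA : ∀ i, (A i).PosDef) (w : Fin m → ℝ) (hw : ∀ i, 0 ≤ w i) (hw1 : ∑ i, w i = 1) :
    ∑ i, w i * Real.log (A i).det ≤ Real.log (∑ i, w i • A i).det := by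
  set S : Matrix (Fin n) (Fin n) ℝ := ∑ i, w i • A i with hS_def
  have hS : S.PosDef := by
    obtain ⟨j, hj⟩ : ∃ j, 0 < w j := by
      by_contra h
      push_neg at h
      have : ∀ i, w i = 0 := fun i => le_antisymm (h i) (hw i)
      simp [this] at hw1
    refine Matrix.PosDef.of_dotProduct_mulVec_pos (my_herm_sum fun i => (hA i).1) fun x hx => ?_
    rw [hS_def, my_sum_mulVec, my_dot_sum]
    refine Finset.sum_pos' (fun i _ => ?_) ⟨j, Finset.mem_univ j, ?_⟩
    · rw [dotProduct_smul]
      exact smul_nonneg (hw i) ((hA i).posSemidef.dotProduct_mulVec_nonneg x)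
    · rw [dotProduct_smul]
      exact smul_pos hj ((hA j).dotProduct_mulVec_pos hx)
  have hSdet : 0 < S.det := hS.det_pos
  set Q : Matrix (Fin n) (Fin n) ℝ := CFC.sqrt S with hQ_def
  have hQps : Q.PosSemidef := Matrix.nonneg_iff_posSemidef.mp (CFC.sqrt_nonneg S)
  have hQQ : Q * Q = S := CFC.sqrt_mul_sqrt_self S (Matrix.nonneg_iff_posSemidef.mpr hS.posSemidef)
  have hQdet2 : Q.det * Q.det = S.det := by rw [← Matrix.det_mul, hQQ]
  have hQdet : Q.det ≠ 0 := by
    intro h; rw [h, mul_zero] at hQdet2; exact hSdet.ne' hQdet2.symm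
  have hQunit : IsUnit Q.det := isUnit_iff_ne_zero.mpr hQdet
  set R : Matrix (Fin n) (Fin n) ℝ := Q⁻¹ with hR_def
  have hRherm : R.IsHermitian := hQps.1.inv
  have hRdet : R.det = Q.det⁻¹ := by
    rw [hR_def, Matrix.det_nonsing_inv, Ring.inverse_eq_inv']
  have hRunit : IsUnit R.det := by
    rw [hRdet]; exact isUnit_iff_ne_zero.mpr (inv_ne_zero hQdet)
  have hRQ : R * Q = 1 := Matrix.nonsing_inv_mul Q hQunit
  have hQR : Q * R = 1 := Matrix.mul_nonsing_inv Q hQunit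
  have hB : ∀ i, (R * A i * R).PosDef := fun i => conj_posDef (hA i) hRherm hRunit
  have hBdet : ∀ i, (R * A i * R).det = (A i).det / S.det := by
    intro i
    rw [Matrix.det_mul, Matrix.det_mul, hRdet]
    rw [← hQdet2]
    field_simp
  have hsum : ∑ i, w i • (R * A i * R) = 1 := by
    have h1 : ∑ i, w i • (R * A i * R) = R * S * R := by
      rw [hS_def, Finset.mul_sum, Finset.sum_mul]
      congr 1; funext i
      rw [Matrix.mul_smul, Matrix.smul_mul]
    rw [h1, ← hQQ, show R * (Q * Q) * R = (R * Q) * (Q * R) by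
      rw [mul_assoc, mul_assoc, mul_assoc], hRQ, hQR, one_mul]
  have htrace : ∑ i, w i * (R * A i * R).trace = n := by
    have h1 : ∑ i, w i * (R * A i * R).trace = (∑ i, w i • (R * A i * R)).trace := by
      rw [Matrix.trace_sum]
      simp [Matrix.trace_smul, smul_eq_mul]
    rw [h1, hsum, Matrix.trace_one]
    simp
  have hineq : ∑ i, w i * Real.log (R * A i * R).det
      ≤ ∑ i, w i * ((R * A i * R).trace - n) :=
    Finset.sum_le_sum fun i _ =>
      mul_le_mul_of_nonneg_left (log_det_le_trace_sub (hB i)) (hw i)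
  have hrhs : ∑ i, w i * ((R * A i * R).trace - n) = 0 := by
    have h1 : ∑ i, w i * ((R * A i * R).trace - n)
        = (∑ i, w i * (R * A i * R).trace) - (∑ i, w i) * n := by
      rw [Finset.sum_mul, ← Finset.sum_sub_distrib]
      congr 1; funext i; ring
    rw [h1, htrace, hw1, one_mul, sub_self]
  have hlog : ∀ i, Real.log (R * A i * R).det = Real.log (A i).det - Real.log S.det := by
    intro i
    rw [hBdet i, Real.log_div (hA i).det_pos.ne' hSdet.ne']
  have hfinal : ∑ i, w i * Real.log (R * A i * R).det
      = (∑ i, w i * Real.log (A i).det) - Real.log S.det := by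
    simp only [hlog]
    have h1 : ∀ i, w i * (Real.log (A i).det - Real.log S.det)
        = w i * Real.log (A i).det - w i * Real.log S.det := fun i => by ring
    simp only [h1]
    rw [Finset.sum_sub_distrib, ← Finset.sum_mul, hw1, one_mul]
  have := hineq.trans_eq hrhs
  rw [hfinal] at this
  linarith

/-- Jensen's inequality for the concave function
`X ↦ log det (X · M⁻¹ + Id)` on the positive semidefinite cone: for `M` symmetric positive
definite, `X₁, …, Xₘ` symmetric positive semidefinite, and convex weights `w`,
`∑ i, wᵢ · log det (Xᵢ · M⁻¹ + Id) ≤ log det ((∑ i, wᵢ Xᵢ) · M⁻¹ + Id)`. -/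
theorem stmt_2 {k m : ℕ} (M : Matrix (Fin k) (Fin k) ℝ) (hM : M.PosDef)
    (X : Fin m → Matrix (Fin k) (Fin k) ℝ) (hX : ∀ i, (X i).PosSemidef)
    (w : Fin m → ℝ) (hw : ∀ i, 0 ≤ w i) (hw1 : ∑ i, w i = 1) :
    ∑ i, w i * Real.log (X i * M⁻¹ + 1).det
      ≤ Real.log ((∑ i, w i • X i) * M⁻¹ + 1).det := by
  have hMdet : 0 < M.det := hM.det_pos
  have hMunit : IsUnit M.det := isUnit_iff_ne_zero.mpr hMdet.ne'
  have hMM : M * M⁻¹ = 1 := Matrix.mul_nonsing_inv M hMunit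
  have hkey : ∀ Y : Matrix (Fin k) (Fin k) ℝ, Y * M⁻¹ + 1 = (Y + M) * M⁻¹ := by
    intro Y
    rw [add_mul, hMM]
  have hdetkey : ∀ Y : Matrix (Fin k) (Fin k) ℝ,
      (Y * M⁻¹ + 1).det = (Y + M).det * M.det⁻¹ := by
    intro Y
    rw [hkey Y, Matrix.det_mul, Matrix.det_nonsing_inv, Ring.inverse_eq_inv']
  have hA : ∀ i, (X i + M).PosDef := fun i => Matrix.PosDef.posSemidef_add (hX i) hM
  have hlogkey : ∀ i, Real.log (X i * M⁻¹ + 1).det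
      = Real.log (X i + M).det - Real.log M.det := by
    intro i
    rw [hdetkey, Real.log_mul (hA i).det_pos.ne' (inv_ne_zero hMdet.ne'),
      Real.log_inv]
    ring
  have hsumX : (∑ i, w i • X i) + M = ∑ i, w i • (X i + M) := by
    simp only [smul_add, Finset.sum_add_distrib, ← Finset.sum_smul]
    rw [hw1, one_smul]
  have hXsum : (∑ i, w i • X i).PosSemidef := by
    refine Matrix.PosSemidef.of_dotProduct_mulVec_nonneg (my_herm_sum fun i => (hX i).1) fun x => ?_
    rw [my_sum_mulVec, my_dot_sum]
    refine Finset.sum_nonneg fun i _ => ?_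
    rw [dotProduct_smul]
    exact smul_nonneg (hw i) ((hX i).dotProduct_mulVec_nonneg x)
  have hSpd : ((∑ i, w i • X i) + M).PosDef := Matrix.PosDef.posSemidef_add hXsum hM
  have hrhs : Real.log ((∑ i, w i • X i) * M⁻¹ + 1).det
      = Real.log ((∑ i, w i • X i) + M).det - Real.log M.det := by
    rw [hdetkey, Real.log_mul hSpd.det_pos.ne' (inv_ne_zero hMdet.ne'), Real.log_inv]
    ring
  rw [hrhs, hsumX]
  simp only [hlogkey]
  have hlhs : ∑ i, w i * (Real.log (X i + M).det - Real.log M.det)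
      = (∑ i, w i * Real.log (X i + M).det) - Real.log M.det := by
    have h1 : ∀ i, w i * (Real.log (X i + M).det - Real.log M.det)
        = w i * Real.log (X i + M).det - w i * Real.log M.det := fun i => by ring
    simp only [h1]
    rw [Finset.sum_sub_distrib, ← Finset.sum_mul, hw1, one_mul]
  rw [hlhs]
  have := jensen_log_det (fun i => X i + M) hA w hw hw1
  linarith
end

section
/- Let Ω, Y_e, Y_a be random variables taking values in finite types on a common finite probability space, and suppose Y_e and Y_a are conditionally independent given Ω (i.e. P(Y_e = u, Y_a = v | Ω = w) = P(Y_e = u | Ω = w)·P(Y_a = v | Ω = w) whenever P(Ω = w) > 0). Then the mutual information between the predictions satisfies I(Y_e ; Y_a) = I(Ω ; Y_e) − I(Ω ; Y_e | Y_a). -/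
open scoped Classical

section FiniteInformationTheory

variable {S : Type*} [Fintype S]

/-- The probability mass function of a random variable `X` on a finite probability space with
point mass `P`: `P(X = a) = ∑_{s : X s = a} P s`. -/
noncomputable def pmfOf {A : Type*} (P : S → ℝ) (X : S → A) (a : A) : ℝ :=
  ∑ s, if X s = a then P s else 0

/-- The joint probability `P(X = a, Y = b)`. -/
noncomputable def pmfOf₂ {A B : Type*} (P : S → ℝ) (X : S → A) (Y : S → B)
    (a : A) (b : B) : ℝ :=
  ∑ s, if X s = a ∧ Y s = b then P s else 0

/-- The Shannon entropy `H(X) = −∑ₐ P(X = a) log P(X = a)` (with `0 log 0 = 0`, which holds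
automatically since `Real.log 0 = 0`). -/
noncomputable def entropy {A : Type*} [Fintype A] (P : S → ℝ) (X : S → A) : ℝ :=
  -∑ a, pmfOf P X a * Real.log (pmfOf P X a)

/-- The conditional entropy `H(X | Y) = −∑_{a,b} P(X = a, Y = b) log P(X = a | Y = b)`, where
`P(X = a | Y = b) = P(X = a, Y = b) / P(Y = b)`. -/
noncomputable def condEntropy {A B : Type*} [Fintype A] [Fintype B]
    (P : S → ℝ) (X : S → A) (Y : S → B) : ℝ :=
  -∑ a, ∑ b, pmfOf₂ P X Y a b * Real.log (pmfOf₂ P X Y a b / pmfOf P Y b)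

/-- The mutual information `I(X ; Y) = H(X) − H(X | Y)`. -/
noncomputable def mutualInfo {A B : Type*} [Fintype A] [Fintype B]
    (P : S → ℝ) (X : S → A) (Y : S → B) : ℝ :=
  entropy P X - condEntropy P X Y

/-- The conditional mutual information `I(X ; Y | Z) = H(X | Z) − H(X | (Y, Z))`. -/
noncomputable def condMutualInfo {A B C : Type*} [Fintype A] [Fintype B] [Fintype C]
    (P : S → ℝ) (X : S → A) (Y : S → B) (Z : S → C) : ℝ :=
  condEntropy P X Z - condEntropy P X (fun s => (Y s, Z s))

end FiniteInformationTheory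

section Lemmas

variable {S : Type*} [Fintype S] (P : S → ℝ)

variable {S : Type*} [Fintype S] (P : S → ℝ)

lemma my_pmf2_nonneg (hP : ∀ s, 0 ≤ P s) {A B : Type*} (X : S → A) (Y : S → B) (a : A) (b : B) :
    0 ≤ pmfOf₂ P X Y a b :=
  Finset.sum_nonneg fun s _ => by split <;> simp [hP s]

lemma my_sum_pmf2_left {A B : Type*} [Fintype A] (X : S → A) (Y : S → B) (b : B) :
    ∑ a, pmfOf₂ P X Y a b = pmfOf P Y b := by
  unfold pmfOf₂ pmfOf
  rw [Finset.sum_comm]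
  refine Finset.sum_congr rfl fun s _ => ?_
  by_cases h : Y s = b <;> simp [h]

lemma my_pmf2_le (hP : ∀ s, 0 ≤ P s) {A B : Type*} [Fintype A] (X : S → A) (Y : S → B)
    (a : A) (b : B) : pmfOf₂ P X Y a b ≤ pmfOf P Y b := by
  rw [← my_sum_pmf2_left P X Y b]
  exact Finset.single_le_sum (fun a' _ => my_pmf2_nonneg P hP X Y a' b) (Finset.mem_univ a)

lemma my_marg_v {E A W : Type*} [Fintype A] (Ye : S → E) (Ya : S → A) (Om : S → W)
    (u : E) (w : W) :
    ∑ v, pmfOf₂ P (fun s => (Ye s, Ya s)) Om (u, v) w = pmfOf₂ P Ye Om u w := by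
  unfold pmfOf₂
  rw [Finset.sum_comm]
  refine Finset.sum_congr rfl fun s _ => ?_
  by_cases h1 : Ye s = u <;> by_cases h2 : Om s = w <;> simp [h1, h2, Prod.ext_iff]

lemma my_marg_u {E A W : Type*} [Fintype E] (Ye : S → E) (Ya : S → A) (Om : S → W)
    (v : A) (w : W) :
    ∑ u, pmfOf₂ P (fun s => (Ye s, Ya s)) Om (u, v) w = pmfOf₂ P Ya Om v w := by
  unfold pmfOf₂
  rw [Finset.sum_comm]
  refine Finset.sum_congr rfl fun s _ => ?_
  by_cases h1 : Ya s = v <;> by_cases h2 : Om s = w <;> simp [h1, h2, Prod.ext_iff]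

lemma my_ci_key {W E A : Type*} [Fintype W] [Fintype E] [Fintype A]
    (hP : ∀ s, 0 ≤ P s) (Om : S → W) (Ye : S → E) (Ya : S → A)
    (hci : ∀ (u : E) (v : A) (w : W), 0 < pmfOf P Om w →
      pmfOf₂ P (fun s => (Ye s, Ya s)) Om (u, v) w / pmfOf P Om w
        = (pmfOf₂ P Ye Om u w / pmfOf P Om w) * (pmfOf₂ P Ya Om v w / pmfOf P Om w)) :
    ∑ w, ∑ u, ∑ v, pmfOf₂ P (fun s => (Ye s, Ya s)) Om (u, v) w
        * Real.log (pmfOf₂ P (fun s => (Ye s, Ya s)) Om (u, v) w)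
      = (∑ w, ∑ u, pmfOf₂ P Ye Om u w * Real.log (pmfOf₂ P Ye Om u w))
        + (∑ w, ∑ v, pmfOf₂ P Ya Om v w * Real.log (pmfOf₂ P Ya Om v w))
        - ∑ w, pmfOf P Om w * Real.log (pmfOf P Om w) := by
  have key : ∀ w u v, pmfOf₂ P (fun s => (Ye s, Ya s)) Om (u, v) w
      * Real.log (pmfOf₂ P (fun s => (Ye s, Ya s)) Om (u, v) w)
      = pmfOf₂ P (fun s => (Ye s, Ya s)) Om (u, v) w * Real.log (pmfOf₂ P Ye Om u w)
        + pmfOf₂ P (fun s => (Ye s, Ya s)) Om (u, v) w * Real.log (pmfOf₂ P Ya Om v w)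
        - pmfOf₂ P (fun s => (Ye s, Ya s)) Om (u, v) w * Real.log (pmfOf P Om w) := by
    intro w u v
    set p3 := pmfOf₂ P (fun s => (Ye s, Ya s)) Om (u, v) w with hp3
    by_cases h0 : p3 = 0
    · simp [h0]
    · have hpos : 0 < p3 :=
        lt_of_le_of_ne (my_pmf2_nonneg P hP _ Om (u, v) w) (Ne.symm h0)
      have hW : 0 < pmfOf P Om w :=
        lt_of_lt_of_le hpos (my_pmf2_le P hP _ Om (u, v) w)
      have hE := hci u v w hW
      rw [← hp3] at hE
      have h3 : p3 = pmfOf₂ P Ye Om u w * pmfOf₂ P Ya Om v w / pmfOf P Om w := by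
        field_simp at hE
        have hE' : (p3 * pmfOf P Om w) * pmfOf P Om w
            = (pmfOf₂ P Ye Om u w * pmfOf₂ P Ya Om v w) * pmfOf P Om w := by
          linear_combination (pmfOf P Om w) * hE
        have h4 := mul_right_cancel₀ hW.ne' hE'
        rw [eq_div_iff hW.ne']
        exact h4
      have hq : pmfOf₂ P Ye Om u w ≠ 0 := by
        intro h; rw [h] at h3; simp at h3; exact h0 h3
      have hr : pmfOf₂ P Ya Om v w ≠ 0 := by
        intro h; rw [h] at h3; simp at h3; exact h0 h3
      rw [h3, Real.log_div (mul_ne_zero hq hr) hW.ne', Real.log_mul hq hr]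
      ring
  have t1 : ∑ w, ∑ u, ∑ v, pmfOf₂ P (fun s => (Ye s, Ya s)) Om (u, v) w
      * Real.log (pmfOf₂ P Ye Om u w)
      = ∑ w, ∑ u, pmfOf₂ P Ye Om u w * Real.log (pmfOf₂ P Ye Om u w) := by
    refine Finset.sum_congr rfl fun w _ => Finset.sum_congr rfl fun u _ => ?_
    rw [← Finset.sum_mul, my_marg_v]
  have t2 : ∑ w, ∑ u, ∑ v, pmfOf₂ P (fun s => (Ye s, Ya s)) Om (u, v) w
      * Real.log (pmfOf₂ P Ya Om v w)
      = ∑ w, ∑ v, pmfOf₂ P Ya Om v w * Real.log (pmfOf₂ P Ya Om v w) := by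
    refine Finset.sum_congr rfl fun w _ => ?_
    rw [Finset.sum_comm]
    refine Finset.sum_congr rfl fun v _ => ?_
    rw [← Finset.sum_mul, my_marg_u]
  have t3 : ∑ w, ∑ u, ∑ v, pmfOf₂ P (fun s => (Ye s, Ya s)) Om (u, v) w
      * Real.log (pmfOf P Om w)
      = ∑ w, pmfOf P Om w * Real.log (pmfOf P Om w) := by
    refine Finset.sum_congr rfl fun w _ => ?_
    simp only [← Finset.sum_mul]
    congr 1
    rw [← my_sum_pmf2_left P (fun s => (Ye s, Ya s)) Om w]
    exact (Fintype.sum_prod_type (f := fun c : E × A => pmfOf₂ P (fun s => (Ye s, Ya s)) Om c w)).symm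
  simp only [key, Finset.sum_add_distrib, Finset.sum_sub_distrib]
  rw [t1, t2, t3]


lemma my_pmf2_swap {A B : Type*} (X : S → A) (Y : S → B) (a : A) (b : B) :
    pmfOf₂ P X Y a b = pmfOf₂ P Y X b a := by
  simp [pmfOf₂, and_comm]

lemma my_pmf_pair {A B : Type*} (X : S → A) (Y : S → B) (a : A) (b : B) :
    pmfOf P (fun s => (X s, Y s)) (a, b) = pmfOf₂ P X Y a b := by
  simp [pmfOf, pmfOf₂, Prod.ext_iff]

lemma my_term_split {x y : ℝ} (hx : 0 ≤ x) (hxy : x ≤ y) :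
    x * Real.log (x / y) = x * Real.log x - x * Real.log y := by
  rcases eq_or_lt_of_le hx with h | h
  · simp [← h]
  · have hy : 0 < y := lt_of_lt_of_le h hxy
    rw [Real.log_div h.ne' hy.ne', mul_sub]

lemma my_condEntropy_eq (hP : ∀ s, 0 ≤ P s) {A B : Type*} [Fintype A] [Fintype B]
    (X : S → A) (Y : S → B) :
    condEntropy P X Y = -(∑ a, ∑ b, pmfOf₂ P X Y a b * Real.log (pmfOf₂ P X Y a b))
      + ∑ b, pmfOf P Y b * Real.log (pmfOf P Y b) := by
  unfold condEntropy
  have h1 : ∀ a b, pmfOf₂ P X Y a b * Real.log (pmfOf₂ P X Y a b / pmfOf P Y b)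
      = pmfOf₂ P X Y a b * Real.log (pmfOf₂ P X Y a b)
        - pmfOf₂ P X Y a b * Real.log (pmfOf P Y b) :=
    fun a b => my_term_split (my_pmf2_nonneg P hP X Y a b) (my_pmf2_le P hP X Y a b)
  have h2 : ∑ a, ∑ b, pmfOf₂ P X Y a b * Real.log (pmfOf P Y b)
      = ∑ b, pmfOf P Y b * Real.log (pmfOf P Y b) := by
    rw [Finset.sum_comm]
    refine Finset.sum_congr rfl fun b _ => ?_
    rw [← Finset.sum_mul, my_sum_pmf2_left]
  simp only [h1, Finset.sum_sub_distrib]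
  rw [h2]
  ring

end Lemmas

/-- Let `Ω`, `Y_e`, `Y_a` be random variables taking values in finite types
on a common finite probability space, with `Y_e` and `Y_a` conditionally independent given
`Ω`. Then `I(Y_e ; Y_a) = I(Ω ; Y_e) − I(Ω ; Y_e | Y_a)`. -/
theorem stmt_18 {S W E A : Type*} [Fintype S] [Fintype W] [Fintype E] [Fintype A]
    (P : S → ℝ) (hP : ∀ s, 0 ≤ P s) (hP1 : ∑ s, P s = 1)
    (Om : S → W) (Ye : S → E) (Ya : S → A)
    (hci : ∀ (u : E) (v : A) (w : W), 0 < pmfOf P Om w →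
      pmfOf₂ P (fun s => (Ye s, Ya s)) Om (u, v) w / pmfOf P Om w
        = (pmfOf₂ P Ye Om u w / pmfOf P Om w) * (pmfOf₂ P Ya Om v w / pmfOf P Om w)) :
    mutualInfo P Ye Ya = mutualInfo P Om Ye - condMutualInfo P Om Ye Ya := by
  unfold mutualInfo condMutualInfo entropy
  rw [my_condEntropy_eq P hP Ye Ya, my_condEntropy_eq P hP Om Ye,
    my_condEntropy_eq P hP Om Ya, my_condEntropy_eq P hP Om (fun s => (Ye s, Ya s))]
  simp only [my_pmf2_swap P Om Ye, my_pmf2_swap P Om Ya,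
    my_pmf2_swap P Om (fun s => (Ye s, Ya s)), Fintype.sum_prod_type, my_pmf_pair]
  linarith [my_ci_key P hP Om Ye Ya hci]
end
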